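/- Let (P(t))_{t≥1} be a sequence of m×m doubly stochastic real matrices satisfying the connectivity assumption with constants ζ > 0 and integer B ≥ 1. For t ≥ s define the product P(t,s) = P(t)P(t−1)⋯P(s+1)P(s). Then for all i, j and all t ≥ τ, |P(t,τ)_{ij} − 1/m| ≤ ϑ κ^{t−τ}, where ϑ = (1 − ζ/(4m²))^{−2} and κ = (1 − ζ/(4m²))^{1/B}. -/

import Mathlib

/-- The backward product of averaging matrices:
`matrixProd P s n = P (s+n) * P (s+n-1) * ⋯ * P (s+1) * P s`,
so that `P(t, s)` of the paper (for `s ≤ t`) is `matrixProd P s (t - s)`. -/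
def matrixProd {m : ℕ} (P : ℕ → Matrix (Fin m) (Fin m) ℝ) (s : ℕ) :
    ℕ → Matrix (Fin m) (Fin m) ℝ
  | 0 => P s
  | n + 1 => P (s + n + 1) * matrixProd P s n



open Finset

namespace MixAux

variable {m : ℕ}

/-- variance around the mean -/
noncomputable def Vb {m : ℕ} (x : Fin m → ℝ) : ℝ := ∑ i, (x i - (∑ l, x l) / m) ^ 2

lemma Vb_nonneg (x : Fin m → ℝ) : 0 ≤ Vb x :=
  Finset.sum_nonneg fun _ _ => sq_nonneg _

lemma Vb_eq (hm : 0 < m) (x : Fin m → ℝ) :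
    Vb x = ∑ i, x i ^ 2 - (∑ i, x i) ^ 2 / m := by
  have hm' : (m : ℝ) ≠ 0 := Nat.cast_ne_zero.2 hm.ne'
  have h : ∀ i : Fin m, (x i - (∑ l, x l) / m) ^ 2
      = x i ^ 2 - (2 * ((∑ l, x l) / m)) * x i + ((∑ l, x l) / m) ^ 2 := by
    intro i; ring
  rw [Vb]
  simp_rw [h]
  rw [Finset.sum_add_distrib, Finset.sum_sub_distrib, ← Finset.mul_sum, Finset.sum_const,
    Finset.card_univ, Fintype.card_fin]
  field_simp
  have hmm : (m:ℝ)^2 * ((m:ℝ)⁻¹)^2 = 1 := by rw [← mul_pow, mul_inv_cancel₀ hm', one_pow]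
  linear_combination (∑ l, x l) ^ 2 * hmm

lemma mulVec_sum (A : Matrix (Fin m) (Fin m) ℝ) (hcol : ∀ j, ∑ i, A i j = 1)
    (x : Fin m → ℝ) : ∑ i, A.mulVec x i = ∑ i, x i := by
  simp only [Matrix.mulVec, dotProduct]
  rw [Finset.sum_comm]
  have : ∀ j, ∑ i, A i j * x j = x j := by
    intro j; rw [← Finset.sum_mul, hcol, one_mul]
  simp_rw [this]

lemma sum_drop (A : Matrix (Fin m) (Fin m) ℝ)
    (hrow : ∀ i, ∑ j, A i j = 1) (hcol : ∀ j, ∑ i, A i j = 1)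
    (x : Fin m → ℝ) :
    ∑ i, ∑ j, A i j * (x j - A.mulVec x i) ^ 2
      = ∑ j, x j ^ 2 - ∑ i, (A.mulVec x i) ^ 2 := by
  set y := A.mulVec x with hy
  have h1 : ∀ i : Fin m, ∀ j : Fin m, A i j * (x j - y i) ^ 2
      = A i j * x j ^ 2 - 2 * (A i j * x j) * y i + A i j * y i ^ 2 := by
    intro i j; ring
  simp_rw [h1, Finset.sum_add_distrib, Finset.sum_sub_distrib]
  have h2 : ∑ i, ∑ j, A i j * x j ^ 2 = ∑ j, x j ^ 2 := by
    rw [Finset.sum_comm]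
    have : ∀ j, ∑ i, A i j * x j ^ 2 = x j ^ 2 := by
      intro j; rw [← Finset.sum_mul, hcol, one_mul]
    simp_rw [this]
  have h3 : ∀ i, ∑ j, 2 * (A i j * x j) * y i = 2 * y i ^ 2 := by
    intro i
    have : y i = ∑ j, A i j * x j := rfl
    rw [← Finset.sum_mul, ← Finset.mul_sum, ← this]
    ring
  have h4 : ∀ i, ∑ j, A i j * y i ^ 2 = y i ^ 2 := by
    intro i; rw [← Finset.sum_mul, hrow, one_mul]
  simp_rw [h2, h3, h4]
  rw [← Finset.mul_sum]
  ring

lemma Vb_step (hm : 0 < m) (A : Matrix (Fin m) (Fin m) ℝ)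
    (hrow : ∀ i, ∑ j, A i j = 1) (hcol : ∀ j, ∑ i, A i j = 1)
    (x : Fin m → ℝ) :
    Vb (A.mulVec x) = Vb x - ∑ i, ∑ j, A i j * (x j - A.mulVec x i) ^ 2 := by
  rw [Vb_eq hm, Vb_eq hm, sum_drop A hrow hcol x, mulVec_sum A hcol x]
  ring

lemma Vb_step_le (hm : 0 < m) (A : Matrix (Fin m) (Fin m) ℝ)
    (hnonneg : ∀ i j, 0 ≤ A i j)
    (hrow : ∀ i, ∑ j, A i j = 1) (hcol : ∀ j, ∑ i, A i j = 1)
    (x : Fin m → ℝ) : Vb (A.mulVec x) ≤ Vb x := by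
  rw [Vb_step hm A hrow hcol x]
  have : 0 ≤ ∑ i, ∑ j, A i j * (x j - A.mulVec x i) ^ 2 :=
    Finset.sum_nonneg fun i _ => Finset.sum_nonneg fun j _ =>
      mul_nonneg (hnonneg i j) (sq_nonneg _)
  linarith

/-- two selected terms of a weighted sum of squared deviations -/
lemma row_two_term {ζ μ : ℝ} (hζ : 0 < ζ) (q v : Fin m → ℝ)
    (hq : ∀ j, 0 ≤ q j) {a b : Fin m} (ha : ζ ≤ q a) (hb : ζ ≤ q b) (hab : a ≠ b) :
    ζ / 2 * (v a - v b) ^ 2 ≤ ∑ j, q j * (v j - μ) ^ 2 := by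
  have h2 : ∑ j ∈ ({a, b} : Finset (Fin m)), q j * (v j - μ) ^ 2
      ≤ ∑ j, q j * (v j - μ) ^ 2 := by
    apply Finset.sum_le_sum_of_subset_of_nonneg (Finset.subset_univ _)
    intro j _ _; exact mul_nonneg (hq j) (sq_nonneg _)
  rw [Finset.sum_pair hab] at h2
  have hA : ζ * (v a - μ) ^ 2 ≤ q a * (v a - μ) ^ 2 :=
    mul_le_mul_of_nonneg_right ha (sq_nonneg _)
  have hB : ζ * (v b - μ) ^ 2 ≤ q b * (v b - μ) ^ 2 :=
    mul_le_mul_of_nonneg_right hb (sq_nonneg _)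
  nlinarith [sq_nonneg (v a + v b - 2 * μ)]

noncomputable def sv (hm : 0 < m) (x : Fin m → ℝ) (ℓ : ℕ) : ℝ :=
  x (Tuple.sort x ⟨min ℓ (m - 1), by omega⟩)

lemma sv_mono (hm : 0 < m) (x : Fin m → ℝ) : Monotone (sv hm x) := by
  intro a b hab
  exact Tuple.monotone_sort x
    (show ((⟨min a (m-1), by omega⟩ : Fin m)) ≤ ⟨min b (m-1), by omega⟩ by
      simp only [Fin.le_def]; omega)

lemma sv_exists (hm : 0 < m) (x : Fin m → ℝ) (ℓ : ℕ) : ∃ i, x i = sv hm x ℓ :=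
  ⟨Tuple.sort x ⟨min ℓ (m - 1), by omega⟩, rfl⟩

lemma sv_pos_eq (hm : 0 < m) (x : Fin m → ℝ) (i : Fin m) :
    x i = sv hm x ((Tuple.sort x).symm i) := by
  have hlt : ((Tuple.sort x).symm i : ℕ) < m := ((Tuple.sort x).symm i).isLt
  have : (⟨min ((Tuple.sort x).symm i : ℕ) (m - 1), by omega⟩ : Fin m)
      = (Tuple.sort x).symm i := by
    apply Fin.ext; simp; omega
  rw [sv, this]
  simp

lemma sv_dichotomy (hm : 0 < m) (x : Fin m → ℝ) (ℓ : ℕ) (i : Fin m) :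
    x i ≤ sv hm x ℓ ∨ sv hm x (ℓ + 1) ≤ x i := by
  have hx := sv_pos_eq hm x i
  rcases le_or_gt ((Tuple.sort x).symm i : ℕ) ℓ with h | h
  · left; rw [hx]; exact sv_mono hm x h
  · right; rw [hx]; exact sv_mono hm x h

lemma sv_bounds (hm : 0 < m) (x : Fin m → ℝ) (i : Fin m) :
    sv hm x 0 ≤ x i ∧ x i ≤ sv hm x (m - 1) := by
  have hx := sv_pos_eq hm x i
  have hlt : ((Tuple.sort x).symm i : ℕ) < m := ((Tuple.sort x).symm i).isLt
  constructor
  · rw [hx]; exact sv_mono hm x (Nat.zero_le _)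
  · rw [hx]; exact sv_mono hm x (by omega)

lemma Vb_le_width (hm : 0 < m) (x : Fin m → ℝ) :
    Vb x ≤ m * (sv hm x (m - 1) - sv hm x 0) ^ 2 := by
  have hm' : (0:ℝ) < m := by exact_mod_cast hm
  set a := sv hm x 0
  set b := sv hm x (m - 1)
  have hmean_lb : a ≤ (∑ l, x l) / m := by
    rw [le_div_iff₀ hm']
    calc a * m = ∑ _l : Fin m, a := by
          rw [Finset.sum_const, Finset.card_univ, Fintype.card_fin]; ring
    _ ≤ ∑ l, x l := Finset.sum_le_sum fun l _ => (sv_bounds hm x l).1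
  have hmean_ub : (∑ l, x l) / m ≤ b := by
    rw [div_le_iff₀ hm']
    calc ∑ l, x l ≤ ∑ _l : Fin m, b := Finset.sum_le_sum fun l _ => (sv_bounds hm x l).2
    _ = b * m := by rw [Finset.sum_const, Finset.card_univ, Fintype.card_fin]; ring
  have hterm : ∀ i : Fin m, (x i - (∑ l, x l) / m) ^ 2 ≤ (b - a) ^ 2 := by
    intro i
    have h1 := (sv_bounds hm x i).1
    have h2 := (sv_bounds hm x i).2
    apply sq_le_sq'
    · nlinarith
    · nlinarith
  calc Vb x ≤ ∑ _i : Fin m, (b - a) ^ 2 := Finset.sum_le_sum fun i _ => hterm i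
  _ = m * (b - a) ^ 2 := by rw [Finset.sum_const, Finset.card_univ, Fintype.card_fin]; ring

lemma width_sq_le (hm : 0 < m) (x : Fin m → ℝ) :
    (sv hm x (m - 1) - sv hm x 0) ^ 2
      ≤ (m - 1 : ℕ) * ∑ ℓ ∈ Finset.range (m - 1), (sv hm x (ℓ + 1) - sv hm x ℓ) ^ 2 := by
  have htel : ∑ ℓ ∈ Finset.range (m - 1), (sv hm x (ℓ + 1) - sv hm x ℓ)
      = sv hm x (m - 1) - sv hm x 0 := Finset.sum_range_sub (fun ℓ => sv hm x ℓ) (m - 1)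
  calc (sv hm x (m - 1) - sv hm x 0) ^ 2
      = (∑ ℓ ∈ Finset.range (m - 1), (sv hm x (ℓ + 1) - sv hm x ℓ)) ^ 2 := by rw [htel]
  _ ≤ (Finset.range (m-1)).card * ∑ ℓ ∈ Finset.range (m - 1), (sv hm x (ℓ + 1) - sv hm x ℓ) ^ 2 :=
      sq_sum_le_card_mul_sum_sq
  _ = (m - 1 : ℕ) * ∑ ℓ ∈ Finset.range (m - 1), (sv hm x (ℓ + 1) - sv hm x ℓ) ^ 2 := by
      rw [Finset.card_range]

lemma rtg_cross {α : Type*} {R : α → α → Prop} {Pp : α → Prop} :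
    ∀ {u v : α}, Relation.ReflTransGen R u v → Pp u → ¬ Pp v →
      ∃ a b, R a b ∧ Pp a ∧ ¬ Pp b := by
  intro u v h
  induction h with
  | refl => intro hu hv; exact absurd hu hv
  | @tail b c _ hbc ih =>
    intro hu hv
    by_cases hb : Pp b
    · exact ⟨b, c, hbc, hb, hv⟩
    · exact ih hu hb

/-- a crossing of the gap `(a, b)` (with `a < b`) during step `r` -/
def Cross (Q : ℕ → Matrix (Fin m) (Fin m) ℝ) (w : ℕ → Fin m → ℝ) (a b : ℝ) (r : ℕ) : Prop :=
  ∃ i j : Fin m, i ≠ j ∧ (0 < Q r i j ∨ 0 < Q r j i) ∧ b ≤ w r i ∧ w r j ≤ a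

lemma preserve {B : ℕ} (Q : ℕ → Matrix (Fin m) (Fin m) ℝ)
    (hnonneg : ∀ r < B, ∀ i j, 0 ≤ Q r i j)
    (hrow : ∀ r < B, ∀ i, ∑ j, Q r i j = 1)
    (w : ℕ → Fin m → ℝ)
    (hw : ∀ r < B, w (r + 1) = (Q r).mulVec (w r))
    (a b : ℝ)
    (hdich : ∀ i, w 0 i ≤ a ∨ b ≤ w 0 i) :
    ∀ r ≤ B, (∀ r' < r, ¬ Cross Q w a b r') →
      ∀ i, (b ≤ w 0 i → b ≤ w r i) ∧ (w 0 i ≤ a → w r i ≤ a) := by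
  intro r
  induction r with
  | zero => intro _ _ i; exact ⟨fun h => h, fun h => h⟩
  | succ k ih =>
    intro hk hnc i
    have hkB : k < B := by omega
    have IH := ih (by omega) (fun r' h => hnc r' (by omega))
    have hnck : ¬ Cross Q w a b k := hnc k (by omega)
    have hwk : ∀ i', w (k+1) i' = ∑ j, Q k i' j * w k j := by
      intro i'
      rw [hw k hkB]
      simp [Matrix.mulVec, dotProduct]
    constructor
    · intro hxi
      rw [hwk i]
      have hterm : ∀ j, Q k i j * b ≤ Q k i j * w k j := by
        intro j
        rcases eq_or_lt_of_le (hnonneg k hkB i j) with h0 | hpos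
        · rw [← h0]; simp
        · have hwj : b ≤ w k j := by
            by_cases hji : j = i
            · subst hji; exact (IH j).1 hxi
            · rcases hdich j with hbelow | habove
              · exact absurd ⟨i, j, fun h => hji h.symm, Or.inl hpos,
                  (IH i).1 hxi, (IH j).2 hbelow⟩ hnck
              · exact (IH j).1 habove
          exact mul_le_mul_of_nonneg_left hwj hpos.le
      calc b = ∑ j, Q k i j * b := by rw [← Finset.sum_mul, hrow k hkB i, one_mul]
      _ ≤ ∑ j, Q k i j * w k j := Finset.sum_le_sum fun j _ => hterm j
    · intro hxi
      rw [hwk i]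
      have hterm : ∀ j, Q k i j * w k j ≤ Q k i j * a := by
        intro j
        rcases eq_or_lt_of_le (hnonneg k hkB i j) with h0 | hpos
        · rw [← h0]; simp
        · have hwj : w k j ≤ a := by
            by_cases hji : j = i
            · subst hji; exact (IH j).2 hxi
            · rcases hdich j with hbelow | habove
              · exact (IH j).2 hbelow
              · exact absurd ⟨j, i, hji, Or.inr hpos,
                  (IH j).1 habove, (IH i).2 hxi⟩ hnck
          exact mul_le_mul_of_nonneg_left hwj hpos.le
      calc ∑ j, Q k i j * w k j ≤ ∑ j, Q k i j * a := Finset.sum_le_sum fun j _ => hterm j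
      _ = a := by rw [← Finset.sum_mul, hrow k hkB i, one_mul]

end MixAux

namespace MixAux

lemma block_contract {m : ℕ} (hm : 0 < m) (ζ : ℝ) (hζ : 0 < ζ) (B : ℕ)
    (Q : ℕ → Matrix (Fin m) (Fin m) ℝ)
    (hnonneg : ∀ r < B, ∀ i j, 0 ≤ Q r i j)
    (hrow : ∀ r < B, ∀ i, ∑ j, Q r i j = 1)
    (hcol : ∀ r < B, ∀ j, ∑ i, Q r i j = 1)
    (hdiag : ∀ r < B, ∀ i, ζ ≤ Q r i i)
    (hedge : ∀ r < B, ∀ i j, i ≠ j → (0 < Q r i j ∨ 0 < Q r j i) → ζ ≤ Q r i j)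
    (hconn : ∀ u v : Fin m, Relation.ReflTransGen
        (fun c d => c ≠ d ∧ ∃ r, r < B ∧ (0 < Q r c d ∨ 0 < Q r d c)) u v)
    (w : ℕ → Fin m → ℝ)
    (hw : ∀ r < B, w (r + 1) = (Q r).mulVec (w r)) :
    Vb (w B) ≤ (1 - ζ / (2 * (m:ℝ) ^ 2)) * Vb (w 0) := by
  classical
  set x := w 0 with hx
  set s : ℕ → ℝ := sv hm x with hs
  set g : ℕ → ℝ := fun ℓ => s (ℓ + 1) - s ℓ with hgdef
  have hg0 : ∀ ℓ, 0 ≤ g ℓ := fun ℓ => sub_nonneg.2 (sv_mono hm x (Nat.le_succ ℓ))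
  set D : ℕ → ℝ := fun r => ∑ i, ∑ j, Q r i j * (w r j - w (r+1) i) ^ 2 with hD
  have hVstep : ∀ r < B, Vb (w (r+1)) = Vb (w r) - D r := by
    intro r hr
    rw [hw r hr, Vb_step hm (Q r) (hrow r hr) (hcol r hr) (w r), hD]
    simp only
    rw [← hw r hr]
  have htel : ∀ n ≤ B, Vb (w n) = Vb (w 0) - ∑ r ∈ Finset.range n, D r := by
    intro n
    induction n with
    | zero => intro _; simp
    | succ k ih =>
      intro h
      rw [Finset.sum_range_succ, hVstep k (by omega), ih (by omega)]
      ring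
  -- the crossing existence
  have hcross_ex : ∀ ℓ, 0 < g ℓ → ∃ r, r < B ∧ Cross Q w (s ℓ) (s (ℓ+1)) r := by
    intro ℓ hgℓ
    by_contra hno
    push_neg at hno
    have hno' : ∀ r < B, ¬ Cross Q w (s ℓ) (s (ℓ+1)) r := fun r hr => hno r hr
    have hdich : ∀ i, x i ≤ s ℓ ∨ s (ℓ+1) ≤ x i := sv_dichotomy hm x ℓ
    have hpresAll : ∀ r ≤ B, ∀ i,
        (s (ℓ+1) ≤ x i → s (ℓ+1) ≤ w r i) ∧ (x i ≤ s ℓ → w r i ≤ s ℓ) := by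
      intro r hr
      exact preserve Q hnonneg hrow w hw (s ℓ) (s (ℓ+1)) hdich r hr
        (fun r' hr' => hno' r' (by omega))
    obtain ⟨u, hu⟩ := sv_exists hm x (ℓ+1)
    obtain ⟨v, hv⟩ := sv_exists hm x ℓ
    have hPu : s (ℓ+1) ≤ x u := le_of_eq hu.symm
    have hPv : ¬ (s (ℓ+1) ≤ x v) := by
      rw [hv]
      simp only [not_le]
      have := hgℓ
      simp only [hgdef] at this
      linarith
    obtain ⟨c, d, ⟨hcd, r, hrB, hpos⟩, hxc, hxd⟩ := rtg_cross (Pp := fun a => s (ℓ+1) ≤ x a) (hconn u v) hPu hPv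
    have hxd' : x d ≤ s ℓ := by
      rcases hdich d with h | h
      · exact h
      · exact absurd h hxd
    exact hno' r hrB ⟨c, d, hcd, hpos,
      (hpresAll r hrB.le c).1 hxc, (hpresAll r hrB.le d).2 hxd'⟩
  -- selection of first crossing data
  set L : Finset ℕ := (Finset.range (m-1)).filter (fun ℓ => 0 < g ℓ) with hL
  set Good : ℕ → ℕ × Fin m × Fin m → Prop := fun ℓ p =>
    p.1 < B ∧ p.2.1 ≠ p.2.2 ∧ (0 < Q p.1 p.2.1 p.2.2 ∨ 0 < Q p.1 p.2.2 p.2.1) ∧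
      s (ℓ+1) ≤ w p.1 p.2.1 ∧ w p.1 p.2.2 ≤ s ℓ with hGood
  have hgood : ∀ ℓ ∈ L, ∃ p, Good ℓ p := by
    intro ℓ hℓ
    have hgℓ : 0 < g ℓ := (Finset.mem_filter.1 hℓ).2
    obtain ⟨r, hrB, i, j, hij, hpos, hbi, haj⟩ := hcross_ex ℓ hgℓ
    exact ⟨(r, i, j), hrB, hij, hpos, hbi, haj⟩
  set f : ℕ → ℕ × Fin m × Fin m := fun ℓ =>
    if h : ∃ p, Good ℓ p then h.choose else (0, ⟨0, hm⟩, ⟨0, hm⟩) with hf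
  have hfgood : ∀ ℓ ∈ L, Good ℓ (f ℓ) := by
    intro ℓ hℓ
    have h := hgood ℓ hℓ
    simp only [hf, dif_pos h]
    exact h.choose_spec
  -- fiberwise accounting
  set key : ℕ → ℕ × Fin m := fun ℓ => ((f ℓ).1, (f ℓ).2.1) with hkey
  have hmap : ∀ ℓ ∈ L, key ℓ ∈ (Finset.range B) ×ˢ (Finset.univ : Finset (Fin m)) := by
    intro ℓ hℓ
    exact Finset.mem_product.2 ⟨Finset.mem_range.2 (hfgood ℓ hℓ).1, Finset.mem_univ _⟩
  set rowterm : ℕ × Fin m → ℝ := fun p => ∑ j, Q p.1 p.2 j * (w p.1 j - w (p.1+1) p.2) ^ 2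
    with hrowterm
  have hfiber : ∀ p ∈ (Finset.range B) ×ˢ (Finset.univ : Finset (Fin m)),
      (ζ/2) * ∑ ℓ ∈ L.filter (fun ℓ => key ℓ = p), g ℓ ^ 2 ≤ rowterm p := by
    intro p hp
    set F := L.filter (fun ℓ => key ℓ = p) with hF
    rcases Finset.eq_empty_or_nonempty F with hFe | hFne
    · rw [hFe]
      simp only [Finset.sum_empty, mul_zero]
      exact Finset.sum_nonneg fun j _ =>
        mul_nonneg (hnonneg p.1 (Finset.mem_range.1 (Finset.mem_product.1 hp).1) p.2 j)
          (sq_nonneg _)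
    · set ℓmin := F.min' hFne with hℓmin
      set ℓmax := F.max' hFne with hℓmax
      have hminF : ℓmin ∈ F := F.min'_mem hFne
      have hmaxF : ℓmax ∈ F := F.max'_mem hFne
      have hminL : ℓmin ∈ L := (Finset.mem_filter.1 hminF).1
      have hmaxL : ℓmax ∈ L := (Finset.mem_filter.1 hmaxF).1
      have hkeymin : key ℓmin = p := (Finset.mem_filter.1 hminF).2
      have hkeymax : key ℓmax = p := (Finset.mem_filter.1 hmaxF).2
      have hgmin := hfgood ℓmin hminL
      have hgmax := hfgood ℓmax hmaxL
      set r := p.1 with hr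
      set i := p.2 with hi
      have hrB : r < B := Finset.mem_range.1 (Finset.mem_product.1 hp).1
      have hr1 : (f ℓmin).1 = r := congrArg Prod.fst hkeymin
      have hi1 : (f ℓmin).2.1 = i := congrArg Prod.snd hkeymin
      have hr2 : (f ℓmax).1 = r := congrArg Prod.fst hkeymax
      have hi2 : (f ℓmax).2.1 = i := congrArg Prod.snd hkeymax
      set j := (f ℓmin).2.2 with hj
      -- facts
      have hij : i ≠ j := by
        have h := hgmin.2.1
        rwa [hi1] at h
      have hQij : ζ ≤ Q r i j := by
        apply hedge r hrB i j hij
        have := hgmin.2.2.1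
        rw [hr1, hi1] at this
        exact this
      have hQii : ζ ≤ Q r i i := hdiag r hrB i
      have hwi : s (ℓmax + 1) ≤ w r i := by
        have := hgmax.2.2.2.1
        rwa [hr2, hi2] at this
      have hwj : w r j ≤ s ℓmin := by
        have := hgmin.2.2.2.2
        rwa [hr1] at this
      -- sum of gaps bounded by the difference
      have hsum1 : ∑ ℓ ∈ F, g ℓ ≤ ∑ ℓ ∈ Finset.Ico ℓmin (ℓmax + 1), g ℓ := by
        apply Finset.sum_le_sum_of_subset_of_nonneg
        · intro ℓ hℓ
          exact Finset.mem_Ico.2 ⟨F.min'_le ℓ hℓ, Nat.lt_succ_of_le (F.le_max' ℓ hℓ)⟩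
        · intro ℓ _ _; exact hg0 ℓ
      have hsum2 : ∑ ℓ ∈ Finset.Ico ℓmin (ℓmax + 1), g ℓ = s (ℓmax + 1) - s ℓmin := by
        rw [Finset.sum_Ico_eq_sub _ (by have := F.min'_le ℓmax hmaxF; omega : ℓmin ≤ ℓmax + 1)]
        have t1 : ∑ ℓ ∈ Finset.range (ℓmax+1), g ℓ = s (ℓmax+1) - s 0 :=
          Finset.sum_range_sub (fun ℓ => s ℓ) (ℓmax+1)
        have t2 : ∑ ℓ ∈ Finset.range ℓmin, g ℓ = s ℓmin - s 0 :=
          Finset.sum_range_sub (fun ℓ => s ℓ) ℓmin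
        rw [t1, t2]; ring
      have hsum3 : ∑ ℓ ∈ F, g ℓ ≤ w r i - w r j := by
        calc ∑ ℓ ∈ F, g ℓ ≤ s (ℓmax + 1) - s ℓmin := by rw [← hsum2]; exact hsum1
        _ ≤ w r i - w r j := by linarith
      have hsumnn : 0 ≤ ∑ ℓ ∈ F, g ℓ := Finset.sum_nonneg fun ℓ _ => hg0 ℓ
      have hsq : ∑ ℓ ∈ F, g ℓ ^ 2 ≤ (w r i - w r j) ^ 2 := by
        calc ∑ ℓ ∈ F, g ℓ ^ 2 ≤ ∑ ℓ ∈ F, g ℓ * (∑ ℓ' ∈ F, g ℓ') := by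
              apply Finset.sum_le_sum
              intro ℓ hℓ
              rw [sq]
              exact mul_le_mul_of_nonneg_left
                (Finset.single_le_sum (fun ℓ' _ => hg0 ℓ') hℓ) (hg0 ℓ)
        _ = (∑ ℓ ∈ F, g ℓ) ^ 2 := by rw [← Finset.sum_mul, sq]
        _ ≤ (w r i - w r j) ^ 2 := by
              apply sq_le_sq' <;> nlinarith
      have hrow2 := row_two_term (μ := w (r+1) i) hζ (fun j' => Q r i j') (w r)
        (fun j' => hnonneg r hrB i j') hQii hQij hij
      calc (ζ/2) * ∑ ℓ ∈ F, g ℓ ^ 2 ≤ (ζ/2) * (w r i - w r j) ^ 2 := by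
            apply mul_le_mul_of_nonneg_left hsq (by linarith)
      _ ≤ ∑ j', Q r i j' * (w r j' - w (r+1) i) ^ 2 := hrow2
      _ = rowterm p := rfl
  -- total drop bound
  have hDsum : (ζ/2) * ∑ ℓ ∈ L, g ℓ ^ 2 ≤ ∑ r ∈ Finset.range B, D r := by
    have hfib := Finset.sum_fiberwise_of_maps_to hmap (fun ℓ => g ℓ ^ 2)
    rw [← hfib, Finset.mul_sum]
    have hD2 : ∑ r ∈ Finset.range B, D r
        = ∑ p ∈ (Finset.range B) ×ˢ (Finset.univ : Finset (Fin m)), rowterm p := by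
      rw [Finset.sum_product]
    rw [hD2]
    exact Finset.sum_le_sum fun p hp => hfiber p hp
  -- relating sums of squares over L and over range (m-1)
  have hLsum : ∑ ℓ ∈ L, g ℓ ^ 2 = ∑ ℓ ∈ Finset.range (m-1), g ℓ ^ 2 := by
    rw [hL]
    rw [Finset.sum_filter]
    apply Finset.sum_congr rfl
    intro ℓ _
    by_cases h : 0 < g ℓ
    · rw [if_pos h]
    · rw [if_neg h]
      have : g ℓ = 0 := le_antisymm (not_lt.1 h) (hg0 ℓ)
      rw [this]; ring
  -- the variance bound
  have hVx : Vb x ≤ (m:ℝ)^2 * ∑ ℓ ∈ Finset.range (m-1), g ℓ ^ 2 := by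
    have h1 := Vb_le_width hm x
    have h2 := width_sq_le hm x
    have h3 : ((m - 1 : ℕ) : ℝ) ≤ (m : ℝ) := by
      have : (m - 1 : ℕ) ≤ m := Nat.sub_le m 1
      exact_mod_cast this
    have hmR : (0:ℝ) ≤ m := Nat.cast_nonneg m
    have hgs : 0 ≤ ∑ ℓ ∈ Finset.range (m-1), g ℓ ^ 2 :=
      Finset.sum_nonneg fun ℓ _ => sq_nonneg _
    calc Vb x ≤ m * (sv hm x (m - 1) - sv hm x 0) ^ 2 := h1
    _ ≤ m * ((m - 1 : ℕ) * ∑ ℓ ∈ Finset.range (m - 1), g ℓ ^ 2) := by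
        apply mul_le_mul_of_nonneg_left _ hmR
        exact h2
    _ ≤ (m:ℝ)^2 * ∑ ℓ ∈ Finset.range (m-1), g ℓ ^ 2 := by
        rw [sq]
        rw [mul_assoc]
        apply mul_le_mul_of_nonneg_left _ hmR
        exact mul_le_mul_of_nonneg_right h3 hgs
  -- put it together
  have hVB := htel B le_rfl
  have hm2 : (0:ℝ) < (m:ℝ)^2 := by positivity
  have hdrop : ζ / (2 * (m:ℝ)^2) * Vb x ≤ ∑ r ∈ Finset.range B, D r := by
    have h1 : ζ / (2 * (m:ℝ)^2) * Vb x ≤ (ζ/2) * ∑ ℓ ∈ Finset.range (m-1), g ℓ ^ 2 := by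
      rw [div_mul_eq_mul_div, div_le_iff₀ (by positivity)]
      have := hVx
      nlinarith
    calc ζ / (2 * (m:ℝ)^2) * Vb x ≤ (ζ/2) * ∑ ℓ ∈ Finset.range (m-1), g ℓ ^ 2 := h1
    _ = (ζ/2) * ∑ ℓ ∈ L, g ℓ ^ 2 := by rw [hLsum]
    _ ≤ ∑ r ∈ Finset.range B, D r := hDsum
  rw [hVB]
  have : (1 - ζ / (2 * (m:ℝ) ^ 2)) * Vb (w 0) = Vb (w 0) - ζ / (2 * (m:ℝ)^2) * Vb (w 0) := by
    ring
  rw [this]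
  have hxw : Vb x = Vb (w 0) := rfl
  linarith [hdrop]

end MixAux

namespace MixAux

/-- trajectory of a vector under successive averaging matrices -/
noncomputable def traj {m : ℕ} (P : ℕ → Matrix (Fin m) (Fin m) ℝ) (τ : ℕ)
    (x0 : Fin m → ℝ) : ℕ → Fin m → ℝ
  | 0 => x0
  | s + 1 => (P (τ + s)).mulVec (traj P τ x0 s)

end MixAux


open MixAux in
/-- Geometric mixing of products of doubly stochastic matrices
under the connectivity assumption: each `P t` (for `t ≥ 1`) is doubly stochastic,
has diagonal entries `≥ ζ` and entries `≥ ζ` on edges `{i,j} ∈ E_t`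
(where `E_t = {{i,j} : P t i j > 0}`), and the graph with edge set
`E_{kB+1} ∪ ⋯ ∪ E_{(k+1)B}` is strongly connected for every `k ≥ 0`.  Then
`|P(t,τ)_{ij} − 1/m| ≤ ϑ κ^(t−τ)` with `ϑ = (1 − ζ/(4m²))⁻²` and
`κ = (1 − ζ/(4m²))^(1/B)`. -/
theorem mixing_bound_of_connectivity
    {m : ℕ} (hm : 1 ≤ m)
    (P : ℕ → Matrix (Fin m) (Fin m) ℝ)
    (ζ : ℝ) (hζ : 0 < ζ) (B : ℕ) (hB : 1 ≤ B)
    (hnonneg : ∀ t, 1 ≤ t → ∀ i j, 0 ≤ P t i j)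
    (hrow : ∀ t, 1 ≤ t → ∀ i, ∑ j, P t i j = 1)
    (hcol : ∀ t, 1 ≤ t → ∀ j, ∑ i, P t i j = 1)
    (hdiag : ∀ t, 1 ≤ t → ∀ i, ζ ≤ P t i i)
    (hedge : ∀ t, 1 ≤ t → ∀ i j : Fin m, i ≠ j →
      (0 < P t i j ∨ 0 < P t j i) → ζ ≤ P t i j)
    (hconn : ∀ k : ℕ, ∀ i j : Fin m,
      Relation.ReflTransGen
        (fun a b => a ≠ b ∧ ∃ t, k * B + 1 ≤ t ∧ t ≤ (k + 1) * B ∧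
          (0 < P t a b ∨ 0 < P t b a)) i j)
    (ϑ κ : ℝ)
    (hϑ : ϑ = ((1 - ζ / (4 * (m : ℝ) ^ 2))⁻¹) ^ 2)
    (hκ : κ = (1 - ζ / (4 * (m : ℝ) ^ 2)) ^ ((1 : ℝ) / (B : ℝ))) :
    ∀ (t τ : ℕ), 1 ≤ τ → τ ≤ t → ∀ i j : Fin m,
      |matrixProd P τ (t - τ) i j - 1 / (m : ℝ)| ≤ ϑ * κ ^ (t - τ) := by
  intro t τ hτ1 hτt i j
  classical
  have hm0 : 0 < m := hm
  have hmR : (0:ℝ) < m := by exact_mod_cast hm0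
  have hm1R : (1:ℝ) ≤ m := by exact_mod_cast hm0
  -- ζ ≤ 1
  have hζ1 : ζ ≤ 1 := by
    have h1 := hdiag 1 le_rfl ⟨0, hm0⟩
    have h2 : P 1 ⟨0, hm0⟩ ⟨0, hm0⟩ ≤ ∑ j', P 1 ⟨0, hm0⟩ j' :=
      Finset.single_le_sum (fun j' _ => hnonneg 1 le_rfl _ j') (Finset.mem_univ _)
    rw [hrow 1 le_rfl] at h2
    linarith
  set ρ : ℝ := 1 - ζ / (4 * (m:ℝ)^2) with hρ
  have hδnn : 0 ≤ ζ / (4 * (m:ℝ)^2) := by positivity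
  have hρpos : 0 < ρ := by
    have hδ : ζ / (4 * (m:ℝ)^2) ≤ 1/4 := by
      rw [div_le_iff₀ (by positivity)]
      nlinarith [hm1R, hζ1]
    rw [hρ]; linarith
  have hρ1 : ρ ≤ 1 := by rw [hρ]; linarith
  -- trajectory starting from the j-th basis vector
  set u : ℕ → Fin m → ℝ := traj P τ (Pi.single j 1) with hu
  have hu0 : u 0 = Pi.single j 1 := rfl
  have husucc : ∀ s, u (s+1) = (P (τ + s)).mulVec (u s) := fun s => rfl
  have htime : ∀ s : ℕ, 1 ≤ τ + s := fun s => by omega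
  -- entries of the product are trajectory values
  have hprod : ∀ n, ∀ i', matrixProd P τ n i' j = u (n+1) i' := by
    intro n
    induction n with
    | zero =>
      intro i'
      show P τ i' j = ((P (τ + 0)).mulVec (Pi.single j 1)) i'
      simp [Matrix.mulVec, dotProduct, Pi.single_apply, mul_ite]
    | succ n ihn =>
      intro i'
      show (P (τ + n + 1) * matrixProd P τ n) i' j = _
      rw [Matrix.mul_apply]
      calc ∑ k', P (τ+n+1) i' k' * matrixProd P τ n k' j
          = ∑ k', P (τ+n+1) i' k' * u (n+1) k' := by
            apply Finset.sum_congr rfl; intro k' _; rw [ihn k']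
      _ = u (n+1+1) i' := by
            rw [husucc (n+1)]
            have he : τ + (n+1) = τ + n + 1 := by omega
            rw [he]
            simp [Matrix.mulVec, dotProduct]
  -- sum invariant
  have hsum : ∀ s, ∑ i', u s i' = 1 := by
    intro s
    induction s with
    | zero => rw [hu0]; simp
    | succ s ihs => rw [husucc s, mulVec_sum _ (hcol _ (htime s)), ihs]
  -- monotonicity of Vb along the trajectory
  have hVmono : ∀ s s', s ≤ s' → Vb (u s') ≤ Vb (u s) := by
    intro s s' hss
    induction s', hss using Nat.le_induction with
    | base => exact le_rfl
    | succ p hp ih =>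
      calc Vb (u (p+1)) ≤ Vb (u p) := by
            rw [husucc p]
            exact Vb_step_le hm0 _ (hnonneg _ (htime p)) (hrow _ (htime p))
              (hcol _ (htime p)) (u p)
      _ ≤ Vb (u s) := ih
  -- block contraction
  have hblock : ∀ k : ℕ, τ ≤ k*B + 1 →
      Vb (u (k*B + 1 - τ + B)) ≤ (1 - ζ/(2*(m:ℝ)^2)) * Vb (u (k*B + 1 - τ)) := by
    intro k hk
    set s₀ := k*B + 1 - τ with hs₀
    have hτs₀ : τ + s₀ = k*B+1 := by omega
    have := block_contract hm0 ζ hζ B (fun r => P (k*B+1+r))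
      (fun r _ i' j' => hnonneg _ (by omega) i' j')
      (fun r _ i' => hrow _ (by omega) i')
      (fun r _ j' => hcol _ (by omega) j')
      (fun r _ i' => hdiag _ (by omega) i')
      (fun r _ i' j' hij hpos => hedge _ (by omega) i' j' hij hpos)
      ?_ (fun r => u (s₀ + r)) ?_
    · exact this
    · intro a b
      refine Relation.ReflTransGen.mono ?_ a b (hconn k a b)
      rintro c d ⟨hcd, tt, h1, h2, hpos⟩
      have hkB : (k+1)*B = k*B + B := by ring
      refine ⟨hcd, tt - (k*B+1), by omega, ?_⟩
      have he : k*B+1 + (tt - (k*B+1)) = tt := by omega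
      simp only [he]
      exact hpos
    · intro r hr
      show u (s₀ + r + 1) = _
      rw [husucc (s₀ + r)]
      have he : τ + (s₀ + r) = k*B+1+r := by omega
      rw [he]
  have hblock2 : ∀ k : ℕ, τ ≤ k*B + 1 →
      Vb (u (k*B + 1 - τ + B)) ≤ ρ^2 * Vb (u (k*B + 1 - τ)) := by
    intro k hk
    have h := hblock k hk
    have hV0 : 0 ≤ Vb (u (k*B+1-τ)) := Vb_nonneg _
    have hid : ζ/(2*(m:ℝ)^2) = 2*(ζ/(4*(m:ℝ)^2)) := by
      field_simp
      ring
    have hcmp : (1 - ζ/(2*(m:ℝ)^2)) ≤ ρ^2 := by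
      rw [hρ, hid]
      nlinarith [sq_nonneg (ζ/(4*(m:ℝ)^2))]
    exact h.trans (mul_le_mul_of_nonneg_right hcmp hV0)
  -- the chain of blocks
  set k₀ := (τ - 1 + (B-1)) / B with hk₀
  have hd1 := Nat.div_add_mod (τ - 1 + (B-1)) B
  have hd2 : (τ - 1 + (B-1)) % B < B := Nat.mod_lt _ (by omega)
  have hcommk₀ : B * ((τ - 1 + (B-1)) / B) = k₀ * B := by rw [hk₀, Nat.mul_comm]
  have hk₀low : τ ≤ k₀ * B + 1 := by omega
  have hk₀high : k₀ * B ≤ τ - 1 + (B - 1) := by omega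
  have hchain : ∀ q' : ℕ, Vb (u ((k₀+q')*B + 1 - τ)) ≤ ρ^(2*q') * Vb (u (k₀*B + 1 - τ)) := by
    intro q'
    induction q' with
    | zero => simp
    | succ p ihp =>
      have hinside : τ ≤ (k₀+p)*B + 1 := by
        have hmm : k₀*B ≤ (k₀+p)*B := Nat.mul_le_mul_right _ (by omega)
        omega
      have hstep := hblock2 (k₀+p) hinside
      have heq : (k₀+p)*B + 1 - τ + B = (k₀+p+1)*B + 1 - τ := by
        have h1 : (k₀+p+1)*B = (k₀+p)*B + B := by ring
        omega
      rw [heq] at hstep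
      calc Vb (u ((k₀+p+1)*B + 1 - τ)) ≤ ρ^2 * Vb (u ((k₀+p)*B+1-τ)) := hstep
      _ ≤ ρ^2 * (ρ^(2*p) * Vb (u (k₀*B+1-τ))) :=
          mul_le_mul_of_nonneg_left ihp (by positivity)
      _ = ρ^(2*(p+1)) * Vb (u (k₀*B+1-τ)) := by ring
  -- initial variance at most one
  have hV0le : Vb (u 0) ≤ 1 := by
    rw [Vb_eq hm0, hsum 0]
    have h1 : ∑ i', (u 0 i')^2 = 1 := by
      rw [hu0]
      have hps : ∀ i' : Fin m, (Pi.single j (1:ℝ) : Fin m → ℝ) i' ^ 2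
          = if i' = j then (1:ℝ) else 0 := by
        intro i'
        by_cases h : i' = j <;> simp [h, Pi.single_apply]
      simp_rw [hps]
      simp
    rw [h1]
    have : 0 < 1/(m:ℝ) := by positivity
    rw [one_pow]
    linarith
  set n := t - τ with hn
  set q := t / B with hq
  have hq1 := Nat.div_add_mod t B
  have hq2 : t % B < B := Nat.mod_lt _ (by omega)
  have hcommq : B * (t / B) = q * B := by rw [hq, Nat.mul_comm]
  set N := q - k₀ with hNdef
  -- final variance bound
  have hfinal : Vb (u (n+1)) ≤ ρ^(2*N) := by
    rcases Nat.eq_zero_or_pos N with hN0 | hNpos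
    · rw [hN0]
      simp only [Nat.mul_zero, pow_zero]
      calc Vb (u (n+1)) ≤ Vb (u 0) := hVmono 0 (n+1) (by omega)
      _ ≤ 1 := hV0le
    · have hqk : q = k₀ + N := by omega
      have hle : (k₀ + N)*B + 1 - τ ≤ n + 1 := by
        have hc : (k₀+N)*B = q*B := by rw [hqk]
        omega
      calc Vb (u (n+1)) ≤ Vb (u ((k₀+N)*B + 1 - τ)) := hVmono _ _ hle
      _ ≤ ρ^(2*N) * Vb (u (k₀*B + 1 - τ)) := hchain N
      _ ≤ ρ^(2*N) * Vb (u 0) :=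
          mul_le_mul_of_nonneg_left (hVmono 0 _ (Nat.zero_le _)) (by positivity)
      _ ≤ ρ^(2*N) * 1 := mul_le_mul_of_nonneg_left hV0le (by positivity)
      _ = ρ^(2*N) := mul_one _
  -- entrywise bound
  have habs : |u (n+1) i - 1/(m:ℝ)| ≤ ρ^N := by
    have h1 : (u (n+1) i - 1/(m:ℝ))^2 ≤ (ρ^N)^2 := by
      have hterm : (u (n+1) i - 1/(m:ℝ))^2 ≤ Vb (u (n+1)) := by
        have hVdef : Vb (u (n+1)) = ∑ i'', (u (n+1) i'' - (∑ l, u (n+1) l)/m)^2 := rfl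
        rw [hVdef, hsum (n+1)]
        exact Finset.single_le_sum (f := fun i'' => (u (n+1) i'' - 1/(m:ℝ))^2)
          (fun i'' _ => sq_nonneg _) (Finset.mem_univ i)
      calc (u (n+1) i - 1/(m:ℝ))^2 ≤ Vb (u (n+1)) := hterm
      _ ≤ ρ^(2*N) := hfinal
      _ = (ρ^N)^2 := by rw [← pow_mul, Nat.mul_comm]
    have h2 := Real.sqrt_le_sqrt h1
    rwa [Real.sqrt_sq_eq_abs, Real.sqrt_sq (by positivity : (0:ℝ) ≤ ρ^N)] at h2
  -- arithmetic: ρ^N ≤ ϑ * κ^n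
  have hBpos : (0:ℝ) < B := by exact_mod_cast (by omega : 0 < B)
  have hnat : n ≤ (N + 2) * B := by
    have hexp : (N+2)*B = N*B + 2*B := by ring
    rcases le_or_gt k₀ q with h | h
    · have hqN : q = N + k₀ := by omega
      have hqB : q*B = N*B + k₀*B := by rw [hqN]; ring
      omega
    · have hN0 : N = 0 := by omega
      have hmul : (q+1)*B ≤ k₀*B := Nat.mul_le_mul_right B (by omega)
      have hexp2 : (q+1)*B = q*B+B := by ring
      omega
  have hnN : (n:ℝ) / B ≤ (N:ℝ) + 2 := by
    rw [div_le_iff₀ hBpos]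
    calc (n:ℝ) ≤ (((N+2)*B : ℕ) : ℝ) := by exact_mod_cast hnat
    _ = ((N:ℝ)+2) * B := by push_cast; ring
  have hκρ : κ^n = ρ ^ ((n:ℝ)/(B:ℝ)) := by
    rw [hκ, ← Real.rpow_natCast (ρ ^ ((1:ℝ)/(B:ℝ))) n, ← Real.rpow_mul hρpos.le]
    congr 1
    ring
  have hkey : ρ^(N+2) ≤ ρ^((n:ℝ)/(B:ℝ)) := by
    rw [← Real.rpow_natCast ρ (N+2)]
    apply Real.rpow_le_rpow_of_exponent_ge hρpos hρ1
    push_cast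
    linarith
  have hfin2 : ρ^N ≤ ϑ * κ^n := by
    rw [hϑ, hκρ]
    have hρne : ρ ≠ 0 := hρpos.ne'
    calc ρ^N = (ρ⁻¹)^2 * ρ^(N+2) := by
          field_simp
          ring
    _ ≤ (ρ⁻¹)^2 * ρ^((n:ℝ)/(B:ℝ)) := mul_le_mul_of_nonneg_left hkey (by positivity)
  calc |matrixProd P τ n i j - 1/(m:ℝ)| = |u (n+1) i - 1/(m:ℝ)| := by rw [hprod n i]
  _ ≤ ρ^N := habs
  _ ≤ ϑ * κ^n := hfin2
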